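/- arXiv:2410.05858 — 3 statements merged into one kernel-verified Lean document; each statement's English description precedes it below -/
import Mathlib

section
/- For u,v in (0,1): min(u,v) - uv <= sqrt(uv(1-u)(1-v)) and uv - max(u+v-1,0) <= sqrt(uv(1-u)(1-v)). -/
/-- For `u,v ∈ (0,1)`: `min(u,v) - uv ≤ √(uv(1-u)(1-v))` and
`uv - max(u+v-1,0) ≤ √(uv(1-u)(1-v))`. -/
theorem stmt_9 (u v : ℝ) (hu : u ∈ Set.Ioo (0:ℝ) 1) (hv : v ∈ Set.Ioo (0:ℝ) 1) :
    min u v - u * v ≤ Real.sqrt (u * v * (1 - u) * (1 - v)) ∧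
    u * v - max (u + v - 1) 0 ≤ Real.sqrt (u * v * (1 - u) * (1 - v)) := by
  obtain ⟨hu0, hu1⟩ := hu
  obtain ⟨hv0, hv1⟩ := hv
  have hb : (0:ℝ) ≤ u * v * (1 - u) * (1 - v) := by
    have := mul_pos (mul_pos (mul_pos hu0 hv0) (by linarith : (0:ℝ) < 1-u)) (by linarith : (0:ℝ) < 1-v)
    linarith
  have key : ∀ a : ℝ, 0 ≤ a → a ^ 2 ≤ u * v * (1 - u) * (1 - v) →
      a ≤ Real.sqrt (u * v * (1 - u) * (1 - v)) := by
    intro a ha h2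
    rw [show a = Real.sqrt (a ^ 2) by rw [Real.sqrt_sq ha]]
    exact Real.sqrt_le_sqrt h2
  constructor
  · rcases le_total u v with h | h
    · rw [min_eq_left h]
      apply key _ (by nlinarith)
      nlinarith [mul_nonneg hu0.le (sub_nonneg.mpr hv1.le)]
    · rw [min_eq_right h]
      apply key _ (by nlinarith)
      nlinarith [mul_nonneg hv0.le (sub_nonneg.mpr hu1.le)]
  · rcases le_total (u + v - 1) 0 with h | h
    · rw [max_eq_right h]
      apply key _ (by nlinarith [mul_pos hu0 hv0])
      nlinarith [mul_nonneg (mul_pos hu0 hv0).le (by linarith : (0:ℝ) ≤ 1-u-v)]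
    · rw [max_eq_left h]
      rcases le_total (u * v - (u + v - 1)) 0 with h' | h'
      · exact h'.trans (Real.sqrt_nonneg _)
      · apply key _ h'
        nlinarith
end

section
/- Under independence of X and Y with continuous margins, for fixed (u,v) in [0,1]^2, E[\bar{C}_n(u,v)] = uv, where the expectation is over the uniformly random pair of rank vectors. -/
/-- The multilinear rank representation of the interpolated empirical copula `C̄ₙ`. -/
noncomputable def barRep (n : ℕ) (R S : Equiv.Perm (Fin n)) (u v : ℝ) : ℝ :=
  (1 / n : ℝ) * ∑ i : Fin n,
    ((if (R i : ℕ) + 1 ≤ ⌊(n : ℝ) * u⌋₊ then (1:ℝ) else 0)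
      + ((n : ℝ) * u - (⌊(n : ℝ) * u⌋₊ : ℝ)) *
        (if (R i : ℕ) + 1 = ⌊(n : ℝ) * u⌋₊ + 1 then 1 else 0)) *
    ((if (S i : ℕ) + 1 ≤ ⌊(n : ℝ) * v⌋₊ then (1:ℝ) else 0)
      + ((n : ℝ) * v - (⌊(n : ℝ) * v⌋₊ : ℝ)) *
        (if (S i : ℕ) + 1 = ⌊(n : ℝ) * v⌋₊ + 1 then 1 else 0))

noncomputable def barF (n : ℕ) (u : ℝ) (k : Fin n) : ℝ :=
  (if (k : ℕ) + 1 ≤ ⌊(n : ℝ) * u⌋₊ then (1:ℝ) else 0)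
    + ((n : ℝ) * u - (⌊(n : ℝ) * u⌋₊ : ℝ)) *
      (if (k : ℕ) + 1 = ⌊(n : ℝ) * u⌋₊ + 1 then 1 else 0)

lemma barRep_eq (n : ℕ) (R S : Equiv.Perm (Fin n)) (u v : ℝ) :
    barRep n R S u v = (1 / n : ℝ) * ∑ i : Fin n, barF n u (R i) * barF n v (S i) := rfl

lemma perm_sum_apply {n : ℕ} (g : Fin n → ℝ) (i : Fin n) :
    (n : ℝ) * ∑ S : Equiv.Perm (Fin n), g (S i) =
      (Nat.factorial n : ℝ) * ∑ k : Fin n, g k := by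
  have h1 : ∀ j : Fin n, (∑ S : Equiv.Perm (Fin n), g (S j)) =
      ∑ S : Equiv.Perm (Fin n), g (S i) := by
    intro j
    refine Fintype.sum_bijective (fun S => S * Equiv.swap i j)
      (Equiv.mulRight _).bijective _ _ ?_
    intro S
    simp [Equiv.Perm.mul_apply, Equiv.swap_apply_right]
  have h2 : ∑ j : Fin n, ∑ S : Equiv.Perm (Fin n), g (S j)
      = (n : ℝ) * ∑ S : Equiv.Perm (Fin n), g (S i) := by
    simp [h1, Finset.sum_const, nsmul_eq_mul]
  have h3 : ∑ j : Fin n, ∑ S : Equiv.Perm (Fin n), g (S j)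
      = (Nat.factorial n : ℝ) * ∑ k : Fin n, g k := by
    rw [Finset.sum_comm]
    have hS : ∀ S : Equiv.Perm (Fin n), ∑ j, g (S j) = ∑ k, g k :=
      fun S => Equiv.sum_comp S g
    simp [hS, Finset.sum_const, nsmul_eq_mul, Fintype.card_perm]
  rw [← h2, h3]

lemma sum_barF {n : ℕ} (hn : 0 < n) (u : ℝ) (hu : u ∈ Set.Icc (0:ℝ) 1) :
    ∑ k : Fin n, barF n u k = (n : ℝ) * u := by
  set a := ⌊(n : ℝ) * u⌋₊ with ha
  have hnu0 : 0 ≤ (n:ℝ) * u := mul_nonneg (Nat.cast_nonneg n) hu.1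
  have hnun : (n:ℝ) * u ≤ n := by
    nlinarith [hu.2, (Nat.cast_nonneg n : (0:ℝ) ≤ n)]
  have haa : (a:ℝ) ≤ (n:ℝ) * u := Nat.floor_le hnu0
  have han : a ≤ n := by
    have h := Nat.floor_le_floor (R := ℝ) hnun
    simpa [ha] using h
  have h1 : ∑ k : Fin n, (if (k : ℕ) + 1 ≤ a then (1:ℝ) else 0) = a := by
    rw [Fin.sum_univ_eq_sum_range (fun k => if k + 1 ≤ a then (1:ℝ) else 0)]
    have hmem : ∀ k, (k + 1 ≤ a) ↔ k ∈ Finset.range a := by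
      intro k; rw [Finset.mem_range]; omega
    simp_rw [hmem]
    rw [Finset.sum_ite_mem]
    have hr : Finset.range n ∩ Finset.range a = Finset.range a := by
      exact Finset.inter_eq_right.mpr (Finset.range_subset_range.mpr han)
    rw [hr]; simp
  have h2 : ∑ k : Fin n, (if (k : ℕ) + 1 = a + 1 then (1:ℝ) else 0)
      = if a < n then 1 else 0 := by
    rw [Fin.sum_univ_eq_sum_range (fun k => if k + 1 = a + 1 then (1:ℝ) else 0)]
    simp_rw [Nat.add_right_cancel_iff]
    rw [Finset.sum_ite_eq' (Finset.range n) a (fun _ => (1:ℝ))]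
    simp [Finset.mem_range]
  unfold barF
  rw [Finset.sum_add_distrib, h1, ← Finset.mul_sum, h2]
  by_cases hcase : a < n
  · simp [hcase]; rw [← ha]; ring
  · have han' : a = n := le_antisymm han (le_of_not_gt hcase)
    have heq : (n:ℝ) * u = n := by
      have : (n:ℝ) ≤ (n:ℝ) * u := by
        calc (n:ℝ) = (a:ℝ) := by exact_mod_cast han'.symm
        _ ≤ (n:ℝ) * u := haa
      linarith
    simp [hcase, han', heq]

/-- Under independence (i.e. averaging over independent uniformly random rank permutations),
`E[C̄ₙ(u,v)] = uv`. -/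
theorem stmt_14 (n : ℕ) (hn : 0 < n)
    (u v : ℝ) (hu : u ∈ Set.Icc (0:ℝ) 1) (hv : v ∈ Set.Icc (0:ℝ) 1) :
    (∑ R : Equiv.Perm (Fin n), ∑ S : Equiv.Perm (Fin n), barRep n R S u v)
        / ((Nat.factorial n : ℝ))^2 = u * v := by
  have hnR : (0:ℝ) < n := Nat.cast_pos.mpr hn
  have hfac : (0:ℝ) < (Nat.factorial n : ℝ) := Nat.cast_pos.mpr n.factorial_pos
  have hsumS : ∀ i : Fin n, ∑ S : Equiv.Perm (Fin n), barF n v (S i)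
      = (Nat.factorial n : ℝ) * v := by
    intro i
    have h := perm_sum_apply (barF n v) i
    rw [sum_barF hn v hv] at h
    have := mul_left_cancel₀ (ne_of_gt hnR)
      (by rw [h]; ring : (n:ℝ) * ∑ S : Equiv.Perm (Fin n), barF n v (S i)
        = (n:ℝ) * ((Nat.factorial n : ℝ) * v))
    exact this
  have key : (∑ R : Equiv.Perm (Fin n), ∑ S : Equiv.Perm (Fin n), barRep n R S u v)
      = (1/n : ℝ) * ((Nat.factorial n : ℝ) * (((n:ℝ) * u) * ((Nat.factorial n : ℝ) * v))) := by
    calc ∑ R : Equiv.Perm (Fin n), ∑ S : Equiv.Perm (Fin n), barRep n R S u v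
        = (1/n : ℝ) * ∑ R : Equiv.Perm (Fin n), ∑ S : Equiv.Perm (Fin n),
            ∑ i : Fin n, barF n u (R i) * barF n v (S i) := by
          simp_rw [barRep_eq, ← Finset.mul_sum]
      _ = (1/n : ℝ) * ∑ R : Equiv.Perm (Fin n), ∑ i : Fin n,
            ∑ S : Equiv.Perm (Fin n), barF n u (R i) * barF n v (S i) := by
          congr 1; exact Finset.sum_congr rfl fun R _ => Finset.sum_comm
      _ = (1/n : ℝ) * ∑ R : Equiv.Perm (Fin n), ∑ i : Fin n,
            barF n u (R i) * ((Nat.factorial n : ℝ) * v) := by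
          congr 1
          refine Finset.sum_congr rfl fun R _ => Finset.sum_congr rfl fun i _ => ?_
          rw [← Finset.mul_sum, hsumS i]
      _ = (1/n : ℝ) * ∑ R : Equiv.Perm (Fin n),
            (((n:ℝ) * u) * ((Nat.factorial n : ℝ) * v)) := by
          congr 1
          refine Finset.sum_congr rfl fun R _ => ?_
          rw [← Finset.sum_mul, Equiv.sum_comp R (barF n u), sum_barF hn u hu]
      _ = (1/n : ℝ) * ((Nat.factorial n : ℝ) * (((n:ℝ) * u) * ((Nat.factorial n : ℝ) * v))) := by
          rw [Finset.sum_const, Finset.card_univ, Fintype.card_perm, nsmul_eq_mul]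
          simp [Fintype.card_fin]
  rw [key]
  field_simp
end

section
/- If d(n) -> infinity, d(n)/sqrt(n) -> 0, grid points p_{n,j} = j/(d(n)+1), and C is a continuous copula with C not identically equal to uv on [0,1]^2, then there exist n_0, a_0 > 0 and p_0 > 0 such that for all n > n_0 the number of grid points (p_{n,j}, p_{n,j'}) with |C(p_{n,j}, p_{n,j'}) - p_{n,j} p_{n,j'}| > a_0 is at least p_0 d(n)^2. -/
open scoped Classical

def IsCopula (C : ℝ → ℝ → ℝ) : Prop :=
  (∀ u ∈ Set.Icc (0:ℝ) 1, C u 0 = 0) ∧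
  (∀ v ∈ Set.Icc (0:ℝ) 1, C 0 v = 0) ∧
  (∀ u ∈ Set.Icc (0:ℝ) 1, C u 1 = u) ∧
  (∀ v ∈ Set.Icc (0:ℝ) 1, C 1 v = v) ∧
  (∀ u₁ u₂ v₁ v₂ : ℝ, u₁ ∈ Set.Icc (0:ℝ) 1 → u₂ ∈ Set.Icc (0:ℝ) 1 →
    v₁ ∈ Set.Icc (0:ℝ) 1 → v₂ ∈ Set.Icc (0:ℝ) 1 → u₁ ≤ u₂ → v₁ ≤ v₂ →
    0 ≤ C u₂ v₂ - C u₁ v₂ - C u₂ v₁ + C u₁ v₁)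

lemma grid_count (w δ' : ℝ) (hδ : 0 < δ') (hw1 : δ' < w) (hw2 : δ' < 1 - w)
    (m : ℕ) (hm : 1 ≤ δ' * m) :
    ∃ S : Finset ℕ, S ⊆ Finset.Icc 1 m ∧
      (∀ j ∈ S, |(j:ℝ)/((m:ℝ)+1) - w| < δ') ∧ δ' * m ≤ (S.card : ℝ) := by
  set N : ℝ := (m:ℝ) + 1 with hN
  have hN0 : (0:ℝ) < N := by positivity
  set A : ℝ := (w - δ') * N with hA
  set B : ℝ := (w + δ') * N with hB
  have hA0 : 0 < A := by
    have : 0 < w - δ' := by linarith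
    positivity
  have hAB : A + 2 ≤ B := by nlinarith [hm, hδ]
  have hBN : B < N := by nlinarith
  have hceil1 : 1 ≤ ⌈B⌉₊ := Nat.one_le_ceil_iff.mpr (by linarith)
  set j₁ : ℕ := ⌊A⌋₊ + 1 with hj₁
  set j₂ : ℕ := ⌈B⌉₊ - 1 with hj₂
  have hj₂cast : (j₂ : ℝ) = (⌈B⌉₊ : ℝ) - 1 := by
    rw [hj₂, Nat.cast_sub hceil1]; norm_num
  have hj₁le : (j₁ : ℝ) ≤ A + 1 := by
    have := Nat.floor_le hA0.le
    rw [hj₁]; push_cast; linarith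
  have hj₁gt : A < (j₁ : ℝ) := by
    have := Nat.lt_floor_add_one A
    rw [hj₁]; push_cast; linarith
  have hj₂ge : B - 1 ≤ (j₂ : ℝ) := by
    have := Nat.le_ceil B
    rw [hj₂cast]; linarith
  have hj₂lt : (j₂ : ℝ) < B := by
    have : (⌈B⌉₊:ℝ) < B + 1 := Nat.ceil_lt_add_one (by linarith)
    rw [hj₂cast]; linarith
  have h12 : j₁ ≤ j₂ := by
    have : (j₁:ℝ) ≤ (j₂:ℝ) := by linarith
    exact_mod_cast this
  refine ⟨Finset.Icc j₁ j₂, ?_, ?_, ?_⟩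
  · intro j hj
    rw [Finset.mem_Icc] at hj ⊢
    refine ⟨by omega, ?_⟩
    have h1 : (j:ℝ) ≤ (j₂:ℝ) := by exact_mod_cast hj.2
    have h2 : (j:ℝ) < ((m:ℝ)+1) := by rw [← hN]; linarith
    have : j < m + 1 := by exact_mod_cast (by push_cast; linarith : (j:ℝ) < ((m+1:ℕ):ℝ))
    omega
  · intro j hj
    rw [Finset.mem_Icc] at hj
    have h1 : A < (j:ℝ) := lt_of_lt_of_le hj₁gt (by exact_mod_cast hj.1)
    have h2 : (j:ℝ) < B := lt_of_le_of_lt (by exact_mod_cast hj.2) hj₂lt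
    rw [abs_lt]
    constructor
    · have : w - δ' < (j:ℝ)/N := (lt_div_iff₀ hN0).mpr (by rw [← hA] at *; linarith)
      linarith
    · have : (j:ℝ)/N < w + δ' := (div_lt_iff₀ hN0).mpr (by rw [← hB] at *; linarith)
      linarith
  · rw [Nat.card_Icc]
    have hcast : ((j₂ + 1 - j₁ : ℕ) : ℝ) = (j₂:ℝ) + 1 - (j₁:ℝ) := by
      rw [Nat.cast_sub (by omega)]; push_cast; ring
    rw [hcast]
    nlinarith [hδ]

/-- If `d(n) → ∞`, `d(n)/√n → 0`, and `C` is a continuous copula not identically equal to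
`uv`, then there exist `n₀`, `a₀ > 0`, `p₀ > 0` such that for all `n > n₀` at least
`p₀·d(n)²` of the grid points `(j/(d(n)+1), j'/(d(n)+1))`, `1 ≤ j,j' ≤ d(n)`, satisfy
`|C(p,p') − p·p'| > a₀`. -/
theorem stmt_19 (C : ℝ → ℝ → ℝ) (hC : IsCopula C)
    (hcont : ContinuousOn (fun p : ℝ × ℝ => C p.1 p.2) (Set.Icc 0 1 ×ˢ Set.Icc 0 1))
    (hne : ∃ u ∈ Set.Icc (0:ℝ) 1, ∃ v ∈ Set.Icc (0:ℝ) 1, C u v ≠ u * v)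
    (d : ℕ → ℕ) (hd : Filter.Tendsto d Filter.atTop Filter.atTop)
    (hds : Filter.Tendsto (fun n => (d n : ℝ) / Real.sqrt n) Filter.atTop (nhds 0)) :
    ∃ n₀ : ℕ, ∃ a₀ > (0:ℝ), ∃ p₀ > (0:ℝ), ∀ n > n₀,
      p₀ * (d n : ℝ)^2 ≤
        (((Finset.Icc 1 (d n) ×ˢ Finset.Icc 1 (d n)).filter
          (fun jj : ℕ × ℕ =>
            a₀ < |C ((jj.1 : ℝ) / ((d n : ℝ) + 1)) ((jj.2 : ℝ) / ((d n : ℝ) + 1))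
              - (jj.1 : ℝ) / ((d n : ℝ) + 1) * ((jj.2 : ℝ) / ((d n : ℝ) + 1))|)).card : ℝ) := by
  obtain ⟨u, hu, v, hv, hCne⟩ := hne
  have hu0 : 0 < u := by
    rcases hu.1.lt_or_eq with h | h
    · exact h
    · exact absurd (by rw [← h, hC.2.1 v hv, zero_mul]) hCne
  have hu1 : u < 1 := by
    rcases hu.2.lt_or_eq with h | h
    · exact h
    · exact absurd (by rw [h, hC.2.2.2.1 v hv, one_mul]) hCne
  have hv0 : 0 < v := by
    rcases hv.1.lt_or_eq with h | h
    · exact h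
    · exact absurd (by rw [← h, hC.1 u hu, mul_zero]) hCne
  have hv1 : v < 1 := by
    rcases hv.2.lt_or_eq with h | h
    · exact h
    · exact absurd (by rw [h, hC.2.2.1 u hu, mul_one]) hCne
  set ε := |C u v - u * v| with hεdef
  have hε0 : 0 < ε := abs_pos.mpr (sub_ne_zero.mpr hCne)
  have hmem : Set.Icc (0:ℝ) 1 ×ˢ Set.Icc (0:ℝ) 1 ∈ nhds (u, v) := by
    refine Filter.mem_of_superset ((isOpen_Ioo.prod isOpen_Ioo).mem_nhds ?_)
      (Set.prod_mono Set.Ioo_subset_Icc_self Set.Ioo_subset_Icc_self)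
    exact ⟨⟨hu0, hu1⟩, ⟨hv0, hv1⟩⟩
  have hcontAt : ContinuousAt (fun p : ℝ × ℝ => C p.1 p.2 - p.1 * p.2) (u, v) :=
    (hcont.continuousAt hmem).sub (continuousAt_fst.mul continuousAt_snd)
  obtain ⟨δ, hδ0, hδ⟩ := Metric.continuousAt_iff.mp hcontAt (ε/2) (by linarith)
  set δ' := min (δ/2) (min (min u (1-u)) (min v (1-v)) / 2) with hδ'def
  have hmin0 : 0 < min (min u (1-u)) (min v (1-v)) := by
    simp only [lt_min_iff]
    exact ⟨⟨hu0, by linarith⟩, ⟨hv0, by linarith⟩⟩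
  have hδ'0 : 0 < δ' := lt_min (by linarith) (by linarith)
  have hδ'δ : δ' < δ := lt_of_le_of_lt (min_le_left _ _) (by linarith)
  have hδ'u : δ' < u := by
    have h1 : δ' ≤ min (min u (1-u)) (min v (1-v)) / 2 := min_le_right _ _
    have h2 : min (min u (1-u)) (min v (1-v)) ≤ u :=
      le_trans (min_le_left _ _) (min_le_left _ _)
    linarith
  have hδ'u1 : δ' < 1 - u := by
    have h1 : δ' ≤ min (min u (1-u)) (min v (1-v)) / 2 := min_le_right _ _
    have h2 : min (min u (1-u)) (min v (1-v)) ≤ 1 - u :=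
      le_trans (min_le_left _ _) (min_le_right _ _)
    linarith
  have hδ'v : δ' < v := by
    have h1 : δ' ≤ min (min u (1-u)) (min v (1-v)) / 2 := min_le_right _ _
    have h2 : min (min u (1-u)) (min v (1-v)) ≤ v :=
      le_trans (min_le_right _ _) (min_le_left _ _)
    linarith
  have hδ'v1 : δ' < 1 - v := by
    have h1 : δ' ≤ min (min u (1-u)) (min v (1-v)) / 2 := min_le_right _ _
    have h2 : min (min u (1-u)) (min v (1-v)) ≤ 1 - v :=
      le_trans (min_le_right _ _) (min_le_right _ _)
    linarith
  -- choose n₀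
  obtain ⟨n₀, hn₀⟩ := (hd.eventually_ge_atTop (⌈1/δ'⌉₊ + 1)).exists_forall_of_atTop
  refine ⟨n₀, ε/2, by linarith, δ'^2, by positivity, ?_⟩
  intro n hn
  set m := d n with hm
  have hdm : 1 ≤ δ' * m := by
    have h1 : (⌈1/δ'⌉₊ + 1 : ℕ) ≤ m := hn₀ n (le_of_lt hn)
    have h2 : (1:ℝ)/δ' ≤ (⌈1/δ'⌉₊ : ℝ) := Nat.le_ceil _
    have h3 : ((⌈1/δ'⌉₊ + 1 : ℕ) : ℝ) ≤ (m:ℝ) := by exact_mod_cast h1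
    have h4 : (1:ℝ)/δ' ≤ (m:ℝ) := by push_cast at h3; linarith
    calc (1:ℝ) = δ' * (1/δ') := by field_simp
    _ ≤ δ' * m := by apply mul_le_mul_of_nonneg_left h4 hδ'0.le
  obtain ⟨Su, hSu_sub, hSu_mem, hSu_card⟩ := grid_count u δ' hδ'0 hδ'u hδ'u1 m hdm
  obtain ⟨Sv, hSv_sub, hSv_mem, hSv_card⟩ := grid_count v δ' hδ'0 hδ'v hδ'v1 m hdm
  have hsub : Su ×ˢ Sv ⊆ (Finset.Icc 1 m ×ˢ Finset.Icc 1 m).filter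
      (fun jj : ℕ × ℕ =>
        ε/2 < |C ((jj.1 : ℝ) / ((m : ℝ) + 1)) ((jj.2 : ℝ) / ((m : ℝ) + 1))
          - (jj.1 : ℝ) / ((m : ℝ) + 1) * ((jj.2 : ℝ) / ((m : ℝ) + 1))|) := by
    intro jj hjj
    rw [Finset.mem_product] at hjj
    rw [Finset.mem_filter, Finset.mem_product]
    refine ⟨⟨hSu_sub hjj.1, hSv_sub hjj.2⟩, ?_⟩
    set p : ℝ := (jj.1 : ℝ) / ((m : ℝ) + 1)
    set q : ℝ := (jj.2 : ℝ) / ((m : ℝ) + 1)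
    have h1 : |p - u| < δ' := hSu_mem _ hjj.1
    have h2 : |q - v| < δ' := hSv_mem _ hjj.2
    have hdist : dist ((p, q) : ℝ × ℝ) (u, v) < δ := by
      rw [Prod.dist_eq]
      simp only [Real.dist_eq]
      exact max_lt (lt_trans h1 hδ'δ) (lt_trans h2 hδ'δ)
    have hclose := hδ hdist
    rw [Real.dist_eq] at hclose
    have hclose' : |C u v - u * v - (C p q - p * q)| < ε / 2 := by
      rw [abs_sub_comm]; simpa using hclose
    have htri := abs_sub_abs_le_abs_sub (C u v - u * v) (C p q - p * q)
    linarith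
  have hcard : ((Su ×ˢ Sv).card : ℝ) ≤
      (((Finset.Icc 1 m ×ˢ Finset.Icc 1 m).filter
        (fun jj : ℕ × ℕ =>
          ε/2 < |C ((jj.1 : ℝ) / ((m : ℝ) + 1)) ((jj.2 : ℝ) / ((m : ℝ) + 1))
            - (jj.1 : ℝ) / ((m : ℝ) + 1) * ((jj.2 : ℝ) / ((m : ℝ) + 1))|)).card : ℝ) := by
    exact_mod_cast Finset.card_le_card hsub
  have hprod : ((Su ×ˢ Sv).card : ℝ) = (Su.card : ℝ) * (Sv.card : ℝ) := by
    rw [Finset.card_product]; push_cast; ring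
  have : δ'^2 * (m:ℝ)^2 ≤ ((Su ×ˢ Sv).card : ℝ) := by
    rw [hprod]
    have h1 : 0 ≤ δ' * m := by positivity
    calc δ'^2 * (m:ℝ)^2 = (δ' * m) * (δ' * m) := by ring
    _ ≤ (Su.card : ℝ) * (Sv.card : ℝ) := mul_le_mul hSu_card hSv_card h1 (by positivity)
  linarith
end
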